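/- If a distribution p on ℝ^d with mean μ satisfies, with degree-2t sum-of-squares proofs, ⟨M₂, v^{⊗2}⟩ ≤ B₂‖v‖₂², ⟨M_{2t-2}, v^{⊗(2t-2)}⟩ ≤ B_{2t-2}‖v‖₂^{2t-2}, and ⟨E[F_t(x)^{⊗2}], v^{⊗2t}⟩ ≤ Λ‖v‖₂^{2t}, and moreover ⟨M_{2t} − E[F_t(x)^{⊗2}], v^{⊗2t}⟩ ≤ N·⟨M_{2t-2}⊗M₂, v^{⊗2t}⟩ with an SOS proof, then ⟨M_{2t}, v^{⊗2t}⟩ ≤ (Λ + N·B₂·B_{2t-2})·‖v‖₂^{2t} with a degree-2t SOS proof. -/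

import Mathlib

open MeasureTheory MvPolynomial

private theorem isSumSq_sq_mul {R : Type*} [CommSemiring R] (c : R) {b : R}
    (hb : IsSumSq b) : IsSumSq (c * c * b) := by
  induction hb with
  | zero => simpa using IsSumSq.zero
  | @sq_add e T pT ih =>
    rw [mul_add]
    refine IsSumSq.add ?_ ih
    have : c * c * (e * e) = (c * e) * (c * e) + 0 := by ring
    rw [this]
    exact IsSumSq.sq_add _ IsSumSq.zero

private theorem isSumSq_mul {R : Type*} [CommSemiring R] {a b : R}
    (ha : IsSumSq a) (hb : IsSumSq b) : IsSumSq (a * b) := by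
  induction ha with
  | zero => simpa using IsSumSq.zero
  | @sq_add c S pS ih =>
    rw [add_mul]
    exact IsSumSq.add (isSumSq_sq_mul c hb) ih

private theorem isSumSq_constN_mul {d : ℕ} {N : ℝ} (hN : 0 ≤ N)
    {s : MvPolynomial (Fin d) ℝ} (hs : IsSumSq s) : IsSumSq (C N * s) := by
  have hC : IsSumSq (C N : MvPolynomial (Fin d) ℝ) := by
    have : (C N : MvPolynomial (Fin d) ℝ)
        = C (Real.sqrt N) * C (Real.sqrt N) + 0 := by
      rw [add_zero, ← C_mul, Real.mul_self_sqrt hN]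
    rw [this]
    exact IsSumSq.sq_add _ IsSumSq.zero
  exact isSumSq_mul hC hs

/-- If, with degree-`2t` SOS proofs, `⟨M₂, v^{⊗2}⟩ ≤ B₂‖v‖²`,
`⟨M_{2t-2}, v^{⊗(2t-2)}⟩ ≤ B_{2t-2}‖v‖^{2t-2}`, `⟨E[F_t(x)^{⊗2}], v^{⊗2t}⟩ ≤ Λ‖v‖^{2t}`
(the latter written as the polynomial `Q`), and
`⟨M_{2t} − E[F_t(x)^{⊗2}], v^{⊗2t}⟩ ≤ N⟨M_{2t-2}⊗M₂, v^{⊗2t}⟩`, then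
`⟨M_{2t}, v^{⊗2t}⟩ ≤ (Λ + N B₂ B_{2t-2})‖v‖^{2t}` with a degree-`2t` SOS proof.
(The centered moment polynomials `⟨M_k, v^{⊗k}⟩` are SOS themselves, as in the context's
`0 ≤_sos a ≤_sos a'` requirement, and `N ≥ 0`.) -/
theorem stmt_18 {d : ℕ} (t : ℕ) (ht : 1 ≤ t)
    (p : Measure (Fin d → ℝ)) [IsProbabilityMeasure p]
    (μ : Fin d → ℝ) (hμ : ∀ i, μ i = ∫ x, x i ∂p)
    (F : (Fin d → ℝ) → (Fin t → Fin d) → ℝ)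
    (Mpoly : ℕ → MvPolynomial (Fin d) ℝ)
    (hMpoly : ∀ k, Mpoly k = ∑ a : Fin k → Fin d,
        C (∫ x, ∏ s, (x (a s) - μ (a s)) ∂p) * ∏ s, X (a s))
    (Q : MvPolynomial (Fin d) ℝ)
    (hQdef : Q = ∑ a : Fin t → Fin d, ∑ b : Fin t → Fin d,
        C (∫ x, F x a * F x b ∂p) * ((∏ s, X (a s)) * (∏ s, X (b s))))
    (B₂ B₂ₜ₂ Λ N : ℝ) (hN : 0 ≤ N)
    (h2 : IsSumSq (C B₂ * (∑ i, X i ^ 2) - Mpoly 2))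
    (h2sos : IsSumSq (Mpoly 2))
    (h2t2 : IsSumSq (C B₂ₜ₂ * (∑ i, X i ^ 2) ^ (t - 1) - Mpoly (2 * t - 2)))
    (h2t2sos : IsSumSq (Mpoly (2 * t - 2)))
    (hQsos : IsSumSq (C Λ * (∑ i, X i ^ 2) ^ t - Q))
    (hmix : IsSumSq (C N * (Mpoly (2 * t - 2) * Mpoly 2) - (Mpoly (2 * t) - Q))) :
    IsSumSq (C (Λ + N * B₂ * B₂ₜ₂) * (∑ i, X i ^ 2) ^ t - Mpoly (2 * t)) := by
  set v : MvPolynomial (Fin d) ℝ := ∑ i, X i ^ 2 with hv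
  -- the third SOS piece: N * (B₂ₜ₂ v^(t-1) * B₂ v - M_{2t-2} M₂)
  have hb' : IsSumSq (C B₂ * v) := by
    have := IsSumSq.add h2 h2sos
    simpa using this
  have hprod : IsSumSq ((C B₂ₜ₂ * v ^ (t - 1) - Mpoly (2 * t - 2)) * (C B₂ * v)
      + Mpoly (2 * t - 2) * (C B₂ * v - Mpoly 2)) :=
    IsSumSq.add (isSumSq_mul h2t2 hb') (isSumSq_mul h2t2sos h2)
  have hthird := isSumSq_constN_mul hN hprod
  have hsum := IsSumSq.add (IsSumSq.add hQsos hmix) hthird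
  have hpow : v ^ (t - 1) * v = v ^ t := by
    rw [← pow_succ, Nat.sub_add_cancel ht]
  have heq : C Λ * v ^ t - Q + (C N * (Mpoly (2 * t - 2) * Mpoly 2) - (Mpoly (2 * t) - Q))
      + C N * ((C B₂ₜ₂ * v ^ (t - 1) - Mpoly (2 * t - 2)) * (C B₂ * v)
        + Mpoly (2 * t - 2) * (C B₂ * v - Mpoly 2))
      = C (Λ + N * B₂ * B₂ₜ₂) * v ^ t - Mpoly (2 * t) := by
    rw [C_add, C_mul, C_mul]
    rw [← hpow]
    ring
  rwa [heq] at hsum
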